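/- If a finitary first-order sentence φ is equivalent (over all structures) to a countable conjunction of ∀ₙ-sentences, then φ is equivalent to a single ∀ₙ-sentence. -/

import Mathlib

open FirstOrder FirstOrder.Language

/-- `QHier b k φ`: `φ` is a `∃ₖ`-formula (if `b = true`) or a `∀ₖ`-formula (if `b = false`),
i.e. a prenex formula with at most `k` alternating quantifier blocks, beginning with `∃`
(resp. `∀`). -/
inductive QHier {L : FirstOrder.Language} {α : Type} : Bool → ℕ → {n : ℕ} → L.BoundedFormula α n → Prop
  | qf {b k n} {φ : L.BoundedFormula α n} : φ.IsQF → QHier b k φ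
  | ex {k n} {φ : L.BoundedFormula α (n + 1)} : QHier true (k + 1) φ → QHier true (k + 1) φ.ex
  | all {k n} {φ : L.BoundedFormula α (n + 1)} : QHier false (k + 1) φ → QHier false (k + 1) φ.all
  | dual {b k n} {φ : L.BoundedFormula α n} : QHier (!b) k φ → QHier b (k + 1) φ

/-- The set of `∃ₖ`-sentences of `L`. -/
def ExSet (L : FirstOrder.Language) (k : ℕ) : Set L.Sentence := {φ | QHier true k φ}
/-- The set of `∀ₖ`-sentences of `L`. -/
def AllSet (L : FirstOrder.Language) (k : ℕ) : Set L.Sentence := {φ | QHier false k φ}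

/-- A level-sentence set: the set of `∃ₖ`- or of `∀ₖ`-sentences for some `k`. -/
def IsLevelSet {L : FirstOrder.Language} (Λ : Set L.Sentence) : Prop :=
  ∃ k, Λ = ExSet L k ∨ Λ = AllSet L k

/-- `¬Λ`: the set of sentences (logically) equivalent to the negation of a sentence in `Λ`. -/
def NegOf {L : FirstOrder.Language} (Λ : Set L.Sentence) : Set L.Sentence :=
  {ψ | ∃ χ ∈ Λ, (∅ : L.Theory) ⊨ᵇ ψ.iff χ.not}

/-- `Th_Λ(S)`: the set of `Λ`-sentences provable from (equivalently, entailed by) `S`. -/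
def ThL {L : FirstOrder.Language} (Λ : Set L.Sentence) (S : L.Theory) : Set L.Sentence :=
  {ψ ∈ Λ | S ⊨ᵇ ψ}

namespace QAux
variable {L : FirstOrder.Language} {α : Type}

theorem qhier_castLE : ∀ {b k m} {φ : L.BoundedFormula α m}, QHier b k φ → ∀ {n} (h : m ≤ n),
    QHier b k (φ.castLE h) := by
  intro b k m φ hφ
  induction hφ with
  | qf hq => exact fun h => .qf hq.castLE
  | all _ ih => exact fun h => (ih (Nat.add_le_add_right h 1)).all
  | ex _ ih => exact fun h => (ih (Nat.add_le_add_right h 1)).ex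
  | dual _ ih => exact fun h => (ih h).dual

theorem qhier_liftAt : ∀ {b k m} {φ : L.BoundedFormula α m}, QHier b k φ → ∀ (n' m' : ℕ),
    QHier b k (φ.liftAt n' m') := by
  intro b k m φ hφ
  induction hφ with
  | qf hq => exact fun n' m' => .qf hq.liftAt
  | all _ ih => exact fun n' m' => (qhier_castLE (ih n' m') (by omega)).all
  | ex _ ih => exact fun n' m' => (qhier_castLE (ih n' m') (by omega)).ex
  | dual _ ih => exact fun n' m' => (ih n' m').dual

/-- Semantic equivalence over all nonempty `Type 0` structures. -/
def QEquiv {n : ℕ} (θ χ : L.BoundedFormula α n) : Prop :=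
  ∀ (M : Type) [L.Structure M], Nonempty M → ∀ (v : α → M) (xs : Fin n → M),
    θ.Realize v xs ↔ χ.Realize v xs

/-- The target: `φ ⊓ ψ` and `φ ⊔ ψ` are each equivalent to a `QHier b k` formula. -/
def Res (b : Bool) (k : ℕ) {n : ℕ} (φ ψ : L.BoundedFormula α n) : Prop :=
  (∃ θ, QHier b k θ ∧ QEquiv θ (φ ⊓ ψ)) ∧ (∃ θ, QHier b k θ ∧ QEquiv θ (φ ⊔ ψ))

theorem qequiv_inf_comm {n} {θ φ ψ : L.BoundedFormula α n} (h : QEquiv θ (φ ⊓ ψ)) :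
    QEquiv θ (ψ ⊓ φ) := by
  intro M _ hM v xs
  rw [h M hM v xs]
  simp only [BoundedFormula.realize_inf]
  tauto

theorem qequiv_sup_comm {n} {θ φ ψ : L.BoundedFormula α n} (h : QEquiv θ (φ ⊔ ψ)) :
    QEquiv θ (ψ ⊔ φ) := by
  intro M _ hM v xs
  rw [h M hM v xs]
  simp only [BoundedFormula.realize_sup]
  tauto

theorem res_comm {b k n} {φ ψ : L.BoundedFormula α n} (h : Res b k φ ψ) : Res b k ψ φ := by
  obtain ⟨⟨θ₁, h₁, e₁⟩, ⟨θ₂, h₂, e₂⟩⟩ := h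
  exact ⟨⟨θ₁, h₁, qequiv_inf_comm e₁⟩, ⟨θ₂, h₂, qequiv_sup_comm e₂⟩⟩

theorem qequiv_all_inf {n} {θ φ : L.BoundedFormula α (n + 1)} {ψ : L.BoundedFormula α n}
    (h : QEquiv θ (φ ⊓ ψ.liftAt 1 n)) : QEquiv θ.all (φ.all ⊓ ψ) := by
  intro M _ hM v xs
  have h' := fun a => h M hM v (Fin.snoc xs a)
  simp only [BoundedFormula.realize_inf, BoundedFormula.realize_all,
    BoundedFormula.realize_liftAt_one_self, Fin.snoc_comp_castSucc] at h' ⊢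
  constructor
  · intro H
    exact ⟨fun a => ((h' a).1 (H a)).1, ((h' hM.some).1 (H hM.some)).2⟩
  · rintro ⟨H1, H2⟩ a
    exact (h' a).2 ⟨H1 a, H2⟩

theorem qequiv_all_sup {n} {θ φ : L.BoundedFormula α (n + 1)} {ψ : L.BoundedFormula α n}
    (h : QEquiv θ (φ ⊔ ψ.liftAt 1 n)) : QEquiv θ.all (φ.all ⊔ ψ) := by
  intro M _ hM v xs
  have h' := fun a => h M hM v (Fin.snoc xs a)
  simp only [BoundedFormula.realize_sup, BoundedFormula.realize_all,
    BoundedFormula.realize_liftAt_one_self, Fin.snoc_comp_castSucc] at h' ⊢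
  constructor
  · intro H
    by_cases hψ : ψ.Realize v xs
    · exact Or.inr hψ
    · exact Or.inl fun a => ((h' a).1 (H a)).resolve_right hψ
  · rintro (H | H) a
    · exact (h' a).2 (Or.inl (H a))
    · exact (h' a).2 (Or.inr H)

theorem qequiv_ex_inf {n} {θ φ : L.BoundedFormula α (n + 1)} {ψ : L.BoundedFormula α n}
    (h : QEquiv θ (φ ⊓ ψ.liftAt 1 n)) : QEquiv θ.ex (φ.ex ⊓ ψ) := by
  intro M _ hM v xs
  have h' := fun a => h M hM v (Fin.snoc xs a)
  simp only [BoundedFormula.realize_inf, BoundedFormula.realize_ex,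
    BoundedFormula.realize_liftAt_one_self, Fin.snoc_comp_castSucc] at h' ⊢
  constructor
  · rintro ⟨a, H⟩
    obtain ⟨H1, H2⟩ := (h' a).1 H
    exact ⟨⟨a, H1⟩, H2⟩
  · rintro ⟨⟨a, H1⟩, H2⟩
    exact ⟨a, (h' a).2 ⟨H1, H2⟩⟩

theorem qequiv_ex_sup {n} {θ φ : L.BoundedFormula α (n + 1)} {ψ : L.BoundedFormula α n}
    (h : QEquiv θ (φ ⊔ ψ.liftAt 1 n)) : QEquiv θ.ex (φ.ex ⊔ ψ) := by
  intro M _ hM v xs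
  have h' := fun a => h M hM v (Fin.snoc xs a)
  simp only [BoundedFormula.realize_sup, BoundedFormula.realize_ex,
    BoundedFormula.realize_liftAt_one_self, Fin.snoc_comp_castSucc] at h' ⊢
  constructor
  · rintro ⟨a, H⟩
    rcases (h' a).1 H with H1 | H2
    · exact Or.inl ⟨a, H1⟩
    · exact Or.inr H2
  · rintro (⟨a, H⟩ | H)
    · exact ⟨a, (h' a).2 (Or.inl H)⟩
    · exact ⟨hM.some, (h' hM.some).2 (Or.inr H)⟩

theorem key_qf : ∀ {b k n} {φ : L.BoundedFormula α n}, QHier b k φ → ∀ {ψ}, ψ.IsQF →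
    Res b k φ ψ := by
  intro b k n φ hφ
  induction hφ with
  | qf h =>
    intro ψ hψ
    exact ⟨⟨_, .qf (h.inf hψ), fun M _ hM v xs => Iff.rfl⟩,
      ⟨_, .qf (h.sup hψ), fun M _ hM v xs => Iff.rfl⟩⟩
  | all _ ih =>
    intro ψ hψ
    obtain ⟨⟨θ₁, hq₁, e₁⟩, ⟨θ₂, hq₂, e₂⟩⟩ := ih (hψ.liftAt (k := 1))
    exact ⟨⟨θ₁.all, hq₁.all, qequiv_all_inf e₁⟩, ⟨θ₂.all, hq₂.all, qequiv_all_sup e₂⟩⟩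
  | ex _ ih =>
    intro ψ hψ
    obtain ⟨⟨θ₁, hq₁, e₁⟩, ⟨θ₂, hq₂, e₂⟩⟩ := ih (hψ.liftAt (k := 1))
    exact ⟨⟨θ₁.ex, hq₁.ex, qequiv_ex_inf e₁⟩, ⟨θ₂.ex, hq₂.ex, qequiv_ex_sup e₂⟩⟩
  | dual _ ih =>
    intro ψ hψ
    obtain ⟨⟨θ₁, hq₁, e₁⟩, ⟨θ₂, hq₂, e₂⟩⟩ := ih hψ
    exact ⟨⟨θ₁, hq₁.dual, e₁⟩, ⟨θ₂, hq₂.dual, e₂⟩⟩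

theorem key_dual {k : ℕ}
    (hrec : ∀ (b : Bool) {n} {φ ψ : L.BoundedFormula α n}, QHier b k φ → QHier b k ψ →
      Res b k φ ψ) :
    ∀ {b K n} {ψ : L.BoundedFormula α n}, QHier b K ψ → K = k + 1 →
      ∀ {φ}, QHier (!b) k φ → Res b K φ ψ := by
  intro b K n ψ hψ
  induction hψ with
  | qf h =>
    intro hK φ hφ
    subst hK
    obtain ⟨⟨θ₁, hq₁, e₁⟩, ⟨θ₂, hq₂, e₂⟩⟩ := key_qf hφ h
    exact ⟨⟨θ₁, hq₁.dual, e₁⟩, ⟨θ₂, hq₂.dual, e₂⟩⟩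
  | all _ ih =>
    intro hK φ hφ
    obtain ⟨⟨θ₁, hq₁, e₁⟩, ⟨θ₂, hq₂, e₂⟩⟩ := ih hK (qhier_liftAt hφ 1 _)
    exact ⟨⟨θ₁.all, hq₁.all, qequiv_inf_comm (qequiv_all_inf (qequiv_inf_comm e₁))⟩,
      ⟨θ₂.all, hq₂.all, qequiv_sup_comm (qequiv_all_sup (qequiv_sup_comm e₂))⟩⟩
  | ex _ ih =>
    intro hK φ hφ
    obtain ⟨⟨θ₁, hq₁, e₁⟩, ⟨θ₂, hq₂, e₂⟩⟩ := ih hK (qhier_liftAt hφ 1 _)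
    exact ⟨⟨θ₁.ex, hq₁.ex, qequiv_inf_comm (qequiv_ex_inf (qequiv_inf_comm e₁))⟩,
      ⟨θ₂.ex, hq₂.ex, qequiv_sup_comm (qequiv_ex_sup (qequiv_sup_comm e₂))⟩⟩
  | dual hψ' _ =>
    intro hK φ hφ
    have hK' := Nat.succ_injective hK
    subst hK'
    obtain ⟨⟨θ₁, hq₁, e₁⟩, ⟨θ₂, hq₂, e₂⟩⟩ := hrec _ hφ hψ'
    exact ⟨⟨θ₁, hq₁.dual, e₁⟩, ⟨θ₂, hq₂.dual, e₂⟩⟩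

/-- `QHier b k` is closed, up to logical equivalence, under `⊓` and `⊔`. -/
theorem key : ∀ (k : ℕ) (b : Bool) {n} {φ ψ : L.BoundedFormula α n},
    QHier b k φ → QHier b k ψ → Res b k φ ψ := by
  intro k
  induction k using Nat.strong_induction_on with
  | _ k IH =>
    intro b n φ ψ hφ hψ
    induction hφ with
    | qf h => exact res_comm (key_qf hψ h)
    | all _ ihd =>
      obtain ⟨⟨θ₁, hq₁, e₁⟩, ⟨θ₂, hq₂, e₂⟩⟩ := ihd IH (qhier_liftAt hψ 1 _)
      exact ⟨⟨θ₁.all, hq₁.all, qequiv_all_inf e₁⟩, ⟨θ₂.all, hq₂.all, qequiv_all_sup e₂⟩⟩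
    | ex _ ihd =>
      obtain ⟨⟨θ₁, hq₁, e₁⟩, ⟨θ₂, hq₂, e₂⟩⟩ := ihd IH (qhier_liftAt hψ 1 _)
      exact ⟨⟨θ₁.ex, hq₁.ex, qequiv_ex_inf e₁⟩, ⟨θ₂.ex, hq₂.ex, qequiv_ex_sup e₂⟩⟩
    | dual hφ' _ =>
      exact key_dual (fun b' _ _ _ h1 h2 => IH _ (Nat.lt_succ_self _) b' h1 h2) hψ rfl hφ'

/-- A compactness step, via ultraproducts over a nonprincipal ultrafilter on `ℕ`. -/
theorem compact_step (f : ℕ → L.Sentence) (φ : L.Sentence)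
    (h : ∀ (M : Type) (_ : L.Structure M), Nonempty M → (∀ i, M ⊨ f i) → M ⊨ φ) :
    ∃ k : ℕ, ∀ (M : Type) (_ : L.Structure M), Nonempty M → (∀ i < k, M ⊨ f i) → M ⊨ φ := by
  by_contra hcon
  push_neg at hcon
  choose M S hne hmod hnot using hcon
  letI : ∀ k, L.Structure (M k) := S
  letI : ∀ k, Nonempty (M k) := hne
  set u : Ultrafilter ℕ := Filter.hyperfilter ℕ with hu
  have hP : ∀ i, (u : Filter ℕ).Product M ⊨ f i := by
    intro i
    rw [Ultraproduct.sentence_realize]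
    refine Filter.Eventually.filter_mono (Filter.hyperfilter_le_cofinite) ?_
    rw [Filter.eventually_cofinite]
    refine Set.Finite.subset (Set.finite_Iic i) ?_
    intro k hk
    simp only [Set.mem_setOf_eq] at hk
    by_contra hik
    simp only [Set.mem_Iic, not_le] at hik
    exact hk (hmod k i hik)
  have hφ : (u : Filter ℕ).Product M ⊨ φ :=
    h _ _ inferInstance hP
  rw [Ultraproduct.sentence_realize] at hφ
  obtain ⟨k, hk⟩ := hφ.exists
  exact hnot k hk

/-- Finite conjunctions of `∀ₙ`-sentences are equivalent to a single `∀ₙ`-sentence. -/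
theorem conj_exists (n : ℕ) (f : ℕ → L.Sentence) (hf : ∀ i, QHier false n (f i)) (k : ℕ) :
    ∃ θ : L.Sentence, QHier false n θ ∧ ∀ (M : Type) (_ : L.Structure M), Nonempty M →
      (M ⊨ θ ↔ ∀ i < k, M ⊨ f i) := by
  induction k with
  | zero =>
    refine ⟨⊤, .qf BoundedFormula.IsQF.top, fun M S hM => ?_⟩
    letI := S
    exact ⟨fun _ i hi => absurd hi (Nat.not_lt_zero i),
      fun _ => BoundedFormula.realize_top.2 trivial⟩
  | succ k ihk =>
    obtain ⟨θ, hθ, hiff⟩ := ihk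
    obtain ⟨⟨θ', hθ', e⟩, -⟩ := key n false hθ (hf k)
    refine ⟨θ', hθ', fun M S hM => ?_⟩
    letI := S
    have h1 : M ⊨ θ' ↔ M ⊨ θ ∧ M ⊨ f k :=
      (e M hM default default).trans BoundedFormula.realize_inf
    rw [h1, hiff M S hM]
    constructor
    · rintro ⟨H, Hk⟩ i hi
      rcases Nat.lt_succ_iff_lt_or_eq.1 hi with h | h
      · exact H i h
      · subst h; exact Hk
    · intro H
      exact ⟨fun i hi => H i (hi.trans (Nat.lt_succ_self k)), H k (Nat.lt_succ_self k)⟩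

end QAux

/-- If a finitary sentence `φ` is equivalent over all structures to a countable conjunction
of `∀ₙ`-sentences, then `φ` is equivalent to a single `∀ₙ`-sentence. -/
theorem statement13 {L : FirstOrder.Language} (φ : L.Sentence) (n : ℕ)
    (A : L.Theory) (hAc : A.Countable) (hA : ∀ ψ ∈ A, QHier false n ψ)
    (heq : ∀ (M : Type) (_ : L.Structure M) (_ : Nonempty M),
      M ⊨ φ ↔ ∀ ψ ∈ A, M ⊨ ψ) :
    ∃ θ : L.Sentence, QHier false n θ ∧
      ∀ (M : Type) (_ : L.Structure M) (_ : Nonempty M), M ⊨ φ ↔ M ⊨ θ := by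
  rcases A.eq_empty_or_nonempty with hA0 | hAne
  · subst hA0
    refine ⟨⊤, .qf BoundedFormula.IsQF.top, fun M S hM => ?_⟩
    letI := S
    rw [heq M S hM]
    exact ⟨fun _ => BoundedFormula.realize_top.2 trivial, fun _ ψ hψ => absurd hψ (by simp)⟩
  · obtain ⟨f, hfA⟩ := hAc.exists_eq_range hAne
    have hf : ∀ i, QHier false n (f i) := fun i => hA (f i) (hfA ▸ Set.mem_range_self i)
    have hforward : ∀ (M : Type) (_ : L.Structure M), Nonempty M → (∀ i, M ⊨ f i) → M ⊨ φ := by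
      intro M S hM h
      refine (heq M S hM).2 fun ψ hψ => ?_
      rw [hfA] at hψ
      obtain ⟨i, rfl⟩ := hψ
      exact h i
    obtain ⟨k, hk⟩ := QAux.compact_step f φ hforward
    obtain ⟨θ, hθ, hiff⟩ := QAux.conj_exists n f hf k
    refine ⟨θ, hθ, fun M S hM => ?_⟩
    letI := S
    constructor
    · intro hφ
      exact (hiff M S hM).2 fun i _ => (heq M S hM).1 hφ (f i) (hfA ▸ Set.mem_range_self i)
    · intro hθM
      exact hk M S hM ((hiff M S hM).1 hθM)
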